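/- Let E be a finite-dimensional real inner product space, F : E → ℝ differentiable with F ≥ 0, θ ∈ (0,1), and α ≥ 0. Suppose that for every w₀ ∈ E there exists a gradient-flow trajectory w : [0,∞) → E of F with w(0) = w₀ satisfying F(w(t)) ≤ F(w₀) / (1 + α θ F(w₀)^θ · t)^{1/θ} for all t ≥ 0. Then F satisfies the Kurdyka–Łojasiewicz inequality: α·F(u)^{1+θ} ≤ ‖∇F(u)‖² for every u ∈ E. -/

import Mathlib

open RealInnerProductSpace

private lemma deriv_nonpos_of_le_aux {f : ℝ → ℝ} {d : ℝ} (hf : HasDerivAt f d 0)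
    (h0 : f 0 = 0) (hle : ∀ t : ℝ, 0 ≤ t → f t ≤ 0) : d ≤ 0 := by
  have hslope := hasDerivAt_iff_tendsto_slope.mp hf
  have hmono : nhdsWithin (0:ℝ) (Set.Ioi 0) ≤ nhdsWithin 0 {0}ᶜ :=
    nhdsWithin_mono 0 (fun x hx => ne_of_gt hx)
  have h2 := hslope.mono_left hmono
  refine le_of_tendsto h2 ?_
  filter_upwards [self_mem_nhdsWithin] with t ht
  have ht' : (0:ℝ) < t := ht
  have : slope f 0 t = f t / t := by simp [slope_def_field, h0]
  rw [this]
  exact div_nonpos_of_nonpos_of_nonneg (hle t ht'.le) ht'.le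

/-- A polynomial rate of convergence for gradient flow from every initial point
implies the Kurdyka–Łojasiewicz inequality. -/
theorem gradient_flow_rate_implies_kl
    {E : Type*} [NormedAddCommGroup E] [InnerProductSpace ℝ E] [FiniteDimensional ℝ E]
    (F : E → ℝ) (hF : Differentiable ℝ F) (hFnonneg : ∀ u, 0 ≤ F u)
    (θ : ℝ) (hθ : θ ∈ Set.Ioo (0 : ℝ) 1) (α : ℝ) (hα : 0 ≤ α)
    (hrate : ∀ w₀ : E, ∃ w : ℝ → E, w 0 = w₀ ∧
      (∀ t : ℝ, 0 ≤ t → HasDerivAt w (-gradient F (w t)) t) ∧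
      (∀ t : ℝ, 0 ≤ t →
        F (w t) ≤ F w₀ / (1 + α * θ * F w₀ ^ θ * t) ^ (1 / θ))) :
    ∀ u : E, α * F u ^ (1 + θ) ≤ ‖gradient F u‖ ^ 2 := by
  intro u
  obtain ⟨hθ0, hθ1⟩ := hθ
  by_cases hC : F u = 0
  · rw [hC, Real.zero_rpow (by positivity), mul_zero]
    positivity
  have hCpos : 0 < F u := lt_of_le_of_ne (hFnonneg u) (Ne.symm hC)
  obtain ⟨w, hw0, hwderiv, hbound⟩ := hrate u
  set c : ℝ := α * θ * F u ^ θ with hc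
  have hcnonneg : 0 ≤ c := by positivity
  -- derivative of g = F ∘ w at 0
  have hgrad : HasGradientAt F (gradient F u) u := (hF u).hasGradientAt
  have hFfd : HasFDerivAt F (InnerProductSpace.toDual ℝ E (gradient F u)) u :=
    hgrad.hasFDerivAt
  have hw0' : HasDerivAt w (-gradient F u) 0 := by
    have := hwderiv 0 le_rfl
    rwa [hw0] at this
  have hFfd' : HasFDerivAt F (InnerProductSpace.toDual ℝ E (gradient F u)) (w 0) := by
    rwa [hw0]
  have hg : HasDerivAt (fun t => F (w t)) (-‖gradient F u‖ ^ 2) 0 := by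
    have := hFfd'.comp_hasDerivAt 0 hw0'
    have heq : (InnerProductSpace.toDual ℝ E (gradient F u)) (-gradient F u)
        = -‖gradient F u‖ ^ 2 := by
      rw [InnerProductSpace.toDual_apply_apply, inner_neg_right, real_inner_self_eq_norm_sq]
    rwa [heq] at this
  -- derivative of h at 0
  have h1 : HasDerivAt (fun t : ℝ => 1 + c * t) c 0 := by
    simpa using ((hasDerivAt_id (0:ℝ)).const_mul c).const_add 1
  have h3 : HasDerivAt (fun t : ℝ => (1 + c * t) ^ (1/θ)) ((1/θ) * c) 0 := by
    have h2 : HasDerivAt (fun x : ℝ => x ^ (1/θ)) ((1/θ) * ((1:ℝ) + c * 0) ^ (1/θ - 1))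
        ((1:ℝ) + c * 0) := Real.hasDerivAt_rpow_const (Or.inl (by simp))
    have := h2.comp 0 h1
    simpa [mul_comm, Function.comp_def] using this
  have hne : ((1 : ℝ) + c * 0) ^ (1/θ) ≠ 0 := by
    simp
  have h4 : HasDerivAt (fun t : ℝ => F u / (1 + c * t) ^ (1/θ))
      (-(α * F u ^ (1 + θ))) 0 := by
    have := (h3.inv hne).const_mul (F u)
    have hval : F u * (-((1/θ) * c) / ((1 + c * 0) ^ (1/θ)) ^ 2)
        = -(α * F u ^ (1 + θ)) := by
      rw [hc]
      have h10 : ((1:ℝ) + α * θ * F u ^ θ * 0) = 1 := by ring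
      rw [h10, Real.one_rpow, Real.rpow_add hCpos, Real.rpow_one]
      field_simp
    rw [hval] at this
    simpa [div_eq_mul_inv] using this
  -- combine
  have hdiff : HasDerivAt (fun t => F (w t) - F u / (1 + c * t) ^ (1/θ))
      (-‖gradient F u‖ ^ 2 - -(α * F u ^ (1 + θ))) 0 := hg.sub h4
  have hd0 : (fun t => F (w t) - F u / (1 + c * t) ^ (1/θ)) 0 = 0 := by
    simp [hw0]
  have hdle : ∀ t : ℝ, 0 ≤ t → F (w t) - F u / (1 + c * t) ^ (1/θ) ≤ 0 := by
    intro t ht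
    have := hbound t ht
    linarith
  have := deriv_nonpos_of_le_aux hdiff hd0 hdle
  linarith
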